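/- Let (X, φ) be an algebraic convex geometry and C a maximal chain in its lattice of closed sets. Define x ≤_C y iff h_C(x) ⊆ h_C(y), where h_C(x) = ⋂{C' ∈ C : x ∈ C'}. Then ≤_C is a total order on X and the family of down-sets of (X, ≤_C) equals C. -/

import Mathlib

/-- φ is a closure operator: extensive, monotone, idempotent. -/
def IsClosureOp {X : Type*} (φ : Set X → Set X) : Prop :=
  (∀ A, A ⊆ φ A) ∧ (∀ A B, A ⊆ B → φ A ⊆ φ B) ∧ (∀ A, φ (φ A) = φ A)

/-- φ is algebraic (finitary): the closure of a set is the union of closures of its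
finite subsets. -/
def IsAlgebraicOp {X : Type*} (φ : Set X → Set X) : Prop :=
  ∀ A, φ A = ⋃₀ {T | ∃ B, B ⊆ A ∧ B.Finite ∧ T = φ B}

/-- The anti-exchange property. -/
def AntiExchange {X : Type*} (φ : Set X → Set X) : Prop :=
  ∀ (x y : X) (A : Set X), x ≠ y → φ A = A → x ∉ A →
    x ∈ φ (A ∪ {y}) → y ∉ φ (A ∪ {x})

/-- A convex geometry: a zero-closure operator with the anti-exchange property. -/
def IsConvexGeometry {X : Type*} (φ : Set X → Set X) : Prop :=
  IsClosureOp φ ∧ φ ∅ = ∅ ∧ AntiExchange φ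

/-- An algebraic convex geometry. -/
def IsAlgConvexGeometry {X : Type*} (φ : Set X → Set X) : Prop :=
  IsClosureOp φ ∧ IsAlgebraicOp φ ∧ φ ∅ = ∅ ∧ AntiExchange φ

/-- An algebraic subset of Pow X : closed under arbitrary intersections
(with ⋂₀ ∅ = X) and under unions of nonempty up-directed subfamilies. -/
def IsAlgSubset {X : Type*} (F : Set (Set X)) : Prop :=
  (∀ S ⊆ F, ⋂₀ S ∈ F) ∧
  (∀ S ⊆ F, S.Nonempty → (∀ A ∈ S, ∀ B ∈ S, ∃ C ∈ S, A ∪ B ⊆ C) → ⋃₀ S ∈ F)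

/-- A maximal chain in the lattice of φ-closed sets. -/
def IsMaxChainOfClosed {X : Type*} (φ : Set X → Set X) (C : Set (Set X)) : Prop :=
  C ⊆ {Y | φ Y = Y} ∧ IsChain (· ⊆ ·) C ∧
  ∀ T, φ T = T → (∀ A ∈ C, T ⊆ A ∨ A ⊆ T) → T ∈ C



lemma chain_finite_subset {X : Type*} {S : Set (Set X)} (hch : IsChain (· ⊆ ·) S)
    (hne : S.Nonempty) {B : Set X} (hB : B.Finite) (hsub : B ⊆ ⋃₀ S) :
    ∃ s ∈ S, B ⊆ s := by
  revert hsub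
  refine Set.Finite.induction_on (motive := fun B _ => B ⊆ ⋃₀ S → ∃ s ∈ S, B ⊆ s) B hB
    (fun _ => ⟨hne.choose, hne.choose_spec, Set.empty_subset _⟩) ?_
  intro a B ha hBfin ih hsub
  obtain ⟨s, hsS, hBs⟩ := ih ((Set.subset_insert a B).trans hsub)
  obtain ⟨t, htS, hat⟩ := hsub (Set.mem_insert a B)
  rcases hch.total hsS htS with h | h
  · exact ⟨t, htS, Set.insert_subset hat (hBs.trans h)⟩
  · exact ⟨s, hsS, Set.insert_subset (h hat) hBs⟩


theorem stmt14X {X : Type*} (φ : Set X → Set X)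
    (hacg : ((∀ A, A ⊆ φ A) ∧ (∀ A B, A ⊆ B → φ A ⊆ φ B) ∧ (∀ A, φ (φ A) = φ A)) ∧
      (∀ A, φ A = ⋃₀ {T | ∃ B, B ⊆ A ∧ B.Finite ∧ T = φ B}) ∧ φ ∅ = ∅ ∧
      (∀ (x y : X) (A : Set X), x ≠ y → φ A = A → x ∉ A →
        x ∈ φ (A ∪ {y}) → y ∉ φ (A ∪ {x})))
    (C : Set (Set X))
    (hC : C ⊆ {Y | φ Y = Y} ∧ IsChain (· ⊆ ·) C ∧
      ∀ T, φ T = T → (∀ A ∈ C, T ⊆ A ∨ A ⊆ T) → T ∈ C) :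
    let r : X → X → Prop :=
      fun x y => (⋂₀ {C' | C' ∈ C ∧ x ∈ C'}) ⊆ ⋂₀ {C' | C' ∈ C ∧ y ∈ C'}
    (∀ x, r x x) ∧ (∀ x y, r x y → r y x → x = y) ∧
      (∀ x y z, r x y → r y z → r x z) ∧ (∀ x y, r x y ∨ r y x) ∧
      {A : Set X | ∀ x y, r x y → y ∈ A → x ∈ A} = C := by
  obtain ⟨⟨hext, hmono, hidem⟩, halg, hempty, hae⟩ := hacg
  obtain ⟨hCcl, hchain, hmax⟩ := hC
  intro r
  -- shorthand
  let h : X → Set X := fun x => ⋂₀ {C' | C' ∈ C ∧ x ∈ C'}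
  let g : X → Set X := fun x => ⋃₀ {C' | C' ∈ C ∧ x ∉ C'}
  have hrdef : ∀ x y, r x y ↔ h x ⊆ h y := fun _ _ => Iff.rfl
  have huniv : Set.univ ∈ C :=
    hmax _ (Set.eq_univ_of_univ_subset (hext _)) (fun A _ => Or.inr (Set.subset_univ _))
  have hinterC : ∀ S ⊆ C, ⋂₀ S ∈ C := by
    intro S hS
    apply hmax
    · refine subset_antisymm ?_ (hext _)
      intro z hz s hs
      have := hmono _ s (Set.sInter_subset_of_mem hs) hz
      rwa [hCcl (hS hs)] at this
    · intro A hA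
      by_cases hc : ∀ s ∈ S, A ⊆ s
      · exact Or.inr (Set.subset_sInter hc)
      · push_neg at hc
        obtain ⟨s, hs, hns⟩ := hc
        refine Or.inl ((Set.sInter_subset_of_mem hs).trans ?_)
        rcases hchain.total (hS hs) hA with h' | h'
        · exact h'
        · exact absurd h' hns
  have hunionC : ∀ S ⊆ C, ⋃₀ S ∈ C := by
    intro S hS
    rcases S.eq_empty_or_nonempty with rfl | hSne
    · simpa using hmax _ hempty (fun A _ => Or.inl (Set.empty_subset _))
    apply hmax
    · refine subset_antisymm ?_ (hext _)
      intro z hz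
      rw [halg] at hz
      obtain ⟨T, ⟨B, hBsub, hBfin, rfl⟩, hzT⟩ := hz
      obtain ⟨s, hsS, hBs⟩ := chain_finite_subset (hchain.mono hS) hSne hBfin hBsub
      have : z ∈ φ s := hmono _ _ hBs hzT
      rw [hCcl (hS hsS)] at this
      exact ⟨s, hsS, this⟩
    · intro A hA
      by_cases hc : ∀ s ∈ S, s ⊆ A
      · exact Or.inl (Set.sUnion_subset hc)
      · push_neg at hc
        obtain ⟨s, hs, hns⟩ := hc
        refine Or.inr (Set.subset_sUnion_of_subset _ s ?_ hs)
        rcases hchain.total (hS hs) hA with h' | h'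
        · exact absurd h' hns
        · exact h'
  have hhmem : ∀ x, h x ∈ C := fun x => hinterC _ (fun s hs => hs.1)
  have hgmem : ∀ x, g x ∈ C := fun x => hunionC _ (fun s hs => hs.1)
  have hxh : ∀ x, x ∈ h x := fun x s hs => hs.2
  have hhsub : ∀ x A, A ∈ C → x ∈ A → h x ⊆ A :=
    fun x A hA hx => Set.sInter_subset_of_mem ⟨hA, hx⟩
  have hgsub : ∀ x A, A ∈ C → x ∉ A → A ⊆ g x :=
    fun x A hA hx => Set.subset_sUnion_of_mem ⟨hA, hx⟩
  have hxg : ∀ x, x ∉ g x := by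
    rintro x ⟨s, ⟨hsC, hxs⟩, hx⟩
    exact hxs hx
  have hgh : ∀ x, g x ⊆ h x := by
    rintro x z ⟨s, ⟨hsC, hxs⟩, hz⟩
    rintro t ⟨htC, hxt⟩
    rcases hchain.total hsC htC with h' | h'
    · exact h' hz
    · exact absurd (h' hxt) hxs
  have hkey : ∀ x, h x = g x ∪ {x} := by
    intro x
    have hDclosed : φ (g x) = g x := hCcl (hgmem x)
    have hgxA : ∀ A ∈ C, x ∈ A → g x ⊆ A := by
      intro A hA hxA
      refine Set.sUnion_subset ?_
      rintro s ⟨hsC, hxs⟩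
      rcases hchain.total hsC hA with h' | h'
      · exact h'
      · exact absurd (h' hxA) hxs
    have hT : φ (g x ∪ {x}) ∈ C := by
      apply hmax _ (hidem _)
      intro A hA
      by_cases hxA : x ∈ A
      · refine Or.inl ?_
        have hsub : g x ∪ {x} ⊆ A :=
          Set.union_subset (hgxA A hA hxA) (by simpa using hxA)
        calc φ (g x ∪ {x}) ⊆ φ A := hmono _ _ hsub
          _ = A := hCcl hA
      · exact Or.inr ((hgsub x A hA hxA).trans
          (Set.subset_union_left.trans (hext _)))
    have hTeq : h x = φ (g x ∪ {x}) := by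
      apply subset_antisymm
      · exact hhsub x _ hT (hext _ (Or.inr rfl))
      · have hsub : g x ∪ {x} ⊆ h x :=
          Set.union_subset (hgh x) (by simpa using hxh x)
        calc φ (g x ∪ {x}) ⊆ φ (h x) := hmono _ _ hsub
          _ = h x := hCcl (hhmem x)
    apply subset_antisymm ?_ (Set.union_subset (hgh x) (by simpa using hxh x))
    intro z hz
    by_contra hzc
    have hzg : z ∉ g x := fun hh => hzc (Or.inl hh)
    have hzx : z ≠ x := fun hh => hzc (Or.inr hh)
    have hT' : φ (g x ∪ {z}) ∈ C := by
      apply hmax _ (hidem _)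
      intro A hA
      by_cases hzA : z ∈ A
      · rcases hchain.total (hgmem x) hA with h' | h'
        · refine Or.inl ?_
          have hsub : g x ∪ {z} ⊆ A := Set.union_subset h' (by simpa using hzA)
          calc φ (g x ∪ {z}) ⊆ φ A := hmono _ _ hsub
            _ = A := hCcl hA
        · exact absurd (h' hzA) hzg
      · have hxA : x ∉ A := fun hxA => hzA (hhsub x A hA hxA hz)
        exact Or.inr ((hgsub x A hA hxA).trans
          (Set.subset_union_left.trans (hext _)))
    have hxT' : x ∈ φ (g x ∪ {z}) := by
      by_contra hx
      have hsub : φ (g x ∪ {z}) ⊆ g x := hgsub x _ hT' hx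
      exact hzg (hsub (hext _ (Or.inr rfl)))
    exact hae z x (g x) hzx hDclosed hzg (hTeq ▸ hz) hxT'
  refine ⟨fun x => subset_rfl, ?_, fun x y z hxy hyz => hxy.trans hyz,
    fun x y => hchain.total (hhmem x) (hhmem y), ?_⟩
  · -- antisymmetry
    intro x y hxy hyx
    have heq : h x = h y := subset_antisymm hxy hyx
    have : x ∈ g y ∪ {y} := by rw [← hkey]; exact heq ▸ hxh x
    rcases this with hx | hx
    · obtain ⟨s, ⟨hsC, hys⟩, hxs⟩ := hx
      exact absurd (heq ▸ hhsub x s hsC hxs <| hxh y) hys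
    · exact hx
  · -- down-sets = C
    ext A
    constructor
    · intro hA
      have hAeq : A = ⋃₀ (h '' A) := by
        ext z
        constructor
        · intro hz
          exact ⟨h z, ⟨z, hz, rfl⟩, hxh z⟩
        · rintro ⟨_, ⟨x, hxA, rfl⟩, hzx⟩
          exact hA z x (hhsub z _ (hhmem x) hzx) hxA
      rw [hAeq]
      exact hunionC _ (by rintro _ ⟨x, hx, rfl⟩; exact hhmem x)
    · intro hA x y hxy hy
      exact hhsub y A hA hy (hxy (hxh x))

/-- For a maximal chain C of an algebraic convex geometry, the relation
x ≤_C y iff h_C(x) ⊆ h_C(y) is a total order on X whose down-sets are exactly the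
members of C. -/
theorem stmt14 {X : Type*} (φ : Set X → Set X)
    (hacg : IsAlgConvexGeometry φ) (C : Set (Set X))
    (hC : IsMaxChainOfClosed φ C) :
    let r : X → X → Prop :=
      fun x y => (⋂₀ {C' | C' ∈ C ∧ x ∈ C'}) ⊆ ⋂₀ {C' | C' ∈ C ∧ y ∈ C'}
    (∀ x, r x x) ∧ (∀ x y, r x y → r y x → x = y) ∧
      (∀ x y z, r x y → r y z → r x z) ∧ (∀ x y, r x y ∨ r y x) ∧
      {A : Set X | ∀ x y, r x y → y ∈ A → x ∈ A} = C := by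
  exact stmt14X φ hacg C hC
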